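/- Let l, m be natural numbers with m ≤ l, m ≡ 2 (mod 4) and l ≡ 5 (mod 8). Then H_l^m(−2) ≡ 0 (mod 8). -/

import Mathlib

/-- The coefficient `σ_l^m(k)` of the Holt–Ille polynomial `H_l^m`. -/
def sigmaLM (l m k : ℕ) : ℚ :=
  if (l + m) % 2 = 0 then
    (-2 : ℚ) ^ k * (((l - m) / 2).choose k : ℚ) * (((l + m) / 2).choose k : ℚ) /
      (((2 * k).choose k : ℚ))
  else
    (-2 : ℚ) ^ k * (((l - m) / 2).choose k : ℚ) * (((l + m) / 2).choose k : ℚ) /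
      ((((2 * k).choose k : ℚ)) * (2 * (k : ℚ) + 1))

/-- The value `H_l^m(−2) = Σ_{k=0}^{⌊(l−m)/2⌋} σ_l^m(k)`. -/
def HLM (l m : ℕ) : ℚ := ∑ k ∈ Finset.range ((l - m) / 2 + 1), sigmaLM l m k

/-- `a ≡ b (mod 2^N)` for rationals (with odd denominators), expressed via the 2-adic
norm on `ℚ₂`: it means `‖a − b‖₂ ≤ 2^(−N)`. -/
def Cong2 (a b : ℚ) (N : ℕ) : Prop :=
  ‖((a - b : ℚ) : ℚ_[2])‖ ≤ (2 : ℝ) ^ (-(N : ℤ))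

open Nat

open Nat in
/-- `(2k+1)‼` is odd. -/
lemma dfac_odd_mod : ∀ k : ℕ, (2 * k + 1)‼ % 2 = 1
  | 0 => rfl
  | (k + 1) => by
    have h : 2 * (k + 1) + 1 = (2 * k + 1) + 2 := by ring
    rw [h, Nat.doubleFactorial_add_two, Nat.mul_mod, dfac_odd_mod k, mul_one]
    omega

open Nat in
/-- Key identity `k! · C(2k,k) · (2k+1) = 2^k · (2k+1)‼`. -/
lemma keyNat (k : ℕ) : k ! * ((2 * k).choose k) * (2 * k + 1) = 2 ^ k * (2 * k + 1)‼ := by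
  have h1 : (2 * k).choose k * k ! * k ! = (2 * k)! := by
    have h := Nat.choose_mul_factorial_mul_factorial (show k ≤ 2 * k by omega)
    rwa [show 2 * k - k = k by omega] at h
  apply Nat.eq_of_mul_eq_mul_right (Nat.factorial_pos k)
  calc k ! * ((2 * k).choose k) * (2 * k + 1) * k !
      = (2 * k + 1) * ((2 * k).choose k * k ! * k !) := by ring
    _ = (2 * k + 1) * (2 * k)! := by rw [h1]
    _ = (2 * k + 1)! := (Nat.factorial_succ (2 * k)).symm
    _ = (2 * k + 1)‼ * (2 * k)‼ := Nat.factorial_eq_mul_doubleFactorial (2 * k)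
    _ = (2 * k + 1)‼ * (2 ^ k * k !) := by rw [Nat.doubleFactorial_two_mul]
    _ = 2 ^ k * (2 * k + 1)‼ * k ! := by ring

lemma choose2_int : ∀ n : ℕ, ((n.choose 2 : ℤ)) * 2 = (n : ℤ) * ((n : ℤ) - 1)
  | 0 => by simp
  | (k + 1) => by
    have h2 : (k + 1).choose 2 * 2 = (k + 1) * k := by
      rw [Nat.choose_two_right, Nat.add_sub_cancel,
        Nat.div_mul_cancel (even_iff_two_dvd.mp (by rw [mul_comm]; exact Nat.even_mul_succ_self k))]
    have h2' : (((k + 1).choose 2 : ℤ)) * 2 = ((k : ℤ) + 1) * (k : ℤ) := by exact_mod_cast h2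
    push_cast
    linear_combination h2'

lemma choose3_int : ∀ n : ℕ, ((n.choose 3 : ℤ)) * 6 = (n : ℤ) * ((n : ℤ) - 1) * ((n : ℤ) - 2)
  | 0 => by simp
  | (k + 1) => by
    have hp : (k + 1).choose 3 = k.choose 2 + k.choose 3 := by
      have := Nat.choose_succ_succ' k 2
      norm_num at this
      exact this
    rw [hp]
    have ih := choose3_int k
    have h2 := choose2_int k
    push_cast
    linear_combination 3 * h2 + ih

/-- If `q · d = 8c` with `d` odd, then `‖q‖₂ ≤ 2^(-3)`. -/
lemma norm8 (q : ℚ) (c d : ℤ) (hd : d % 2 = 1) (h : q * (d : ℚ) = ((8 * c : ℤ) : ℚ)) :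
    ‖(q : ℚ_[2])‖ ≤ (2 : ℝ) ^ (-(3 : ℤ)) := by
  have hd1 : ‖((d : ℚ_[2]))‖ = 1 := by
    rcases eq_or_lt_of_le (Padic.norm_int_le_one (p := 2) d) with h1 | h1
    · exact h1
    · exfalso
      rw [Padic.norm_intCast_lt_one_iff] at h1
      obtain ⟨t, ht⟩ := h1
      omega
  have key : ‖(q : ℚ_[2]) * (d : ℚ_[2])‖ ≤ (2 : ℝ) ^ (-(3 : ℤ)) := by
    have e : (q : ℚ_[2]) * (d : ℚ_[2]) = ((8 * c : ℤ) : ℚ_[2]) := by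
      have h2 := congrArg (fun r : ℚ => (r : ℚ_[2])) h
      push_cast at h2 ⊢
      exact h2
    rw [e]
    have h3 := (Padic.norm_int_le_pow_iff_dvd (p := 2) (8 * c) 3).mpr ⟨c, by ring⟩
    have h4 : ((2 : ℕ) : ℝ) ^ (-(3 : ℕ) : ℤ) = (2 : ℝ) ^ (-(3 : ℤ)) := by norm_num
    rw [h4] at h3
    exact h3
  calc ‖(q : ℚ_[2])‖ = ‖(q : ℚ_[2])‖ * ‖(d : ℚ_[2])‖ := by rw [hd1, mul_one]
    _ = ‖(q : ℚ_[2]) * (d : ℚ_[2])‖ := (norm_mul _ _).symm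
    _ ≤ _ := key

/-- The per-term identity `σ_k · (2k+1)‼ = (−1)^k · k! · C(a,k) · C(b,k)`. -/
lemma sigma_mul (l m k : ℕ) (hodd : (l + m) % 2 = 1) :
    sigmaLM l m k * ((2 * k + 1)‼ : ℚ) =
      (-1) ^ k * (k ! : ℚ) * ((((l - m) / 2).choose k : ℚ)) * ((((l + m) / 2).choose k : ℚ)) := by
  have hC : (((2 * k).choose k : ℕ) : ℚ) ≠ 0 := by
    exact_mod_cast (Nat.choose_pos (show k ≤ 2 * k by omega)).ne'
  have hK : (2 * (k : ℚ) + 1) ≠ 0 := by positivity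
  have hQ : (k ! : ℚ) * (((2 * k).choose k : ℕ) : ℚ) * (2 * (k : ℚ) + 1)
      = 2 ^ k * (((2 * k + 1)‼ : ℕ) : ℚ) := by
    exact_mod_cast congrArg (fun n : ℕ => (n : ℚ)) (keyNat k)
  rw [sigmaLM, if_neg (by omega)]
  rw [div_mul_eq_mul_div, div_eq_iff (mul_ne_zero hC hK)]
  rw [show ((-2 : ℚ)) = (-1) * 2 from by norm_num, mul_pow]
  linear_combination (-(-1 : ℚ) ^ k * ((((l - m) / 2).choose k : ℕ) : ℚ)
    * ((((l + m) / 2).choose k : ℕ) : ℚ)) * hQ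

/-- The head congruence, checked over `ZMod 8`. -/
lemma zmodKey : ∀ x y w : ZMod 8, x + y = 4 * w + 1 →
    945 - 315 * ((2 * x + 1) * (2 * y + 1))
      + 126 * ((x * (2 * x + 1)) * (y * (2 * y + 1)))
      - 6 * ((x * (2 * x + 1) * (2 * x - 1)) * (y * (2 * y + 1) * (2 * y - 1))) = 0 := by
  decide

theorem HLM_cong_zero_of_l_mod_eight' (l m : ℕ) (hml : m ≤ l) (hm : m % 4 = 2)
    (hl : l % 8 = 5) : Cong2 (HLM l m) 0 3 := by
  have hodd : (l + m) % 2 = 1 := by omega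
  obtain ⟨x, hx⟩ : ∃ x, (l - m) / 2 = 2 * x + 1 := ⟨((l - m) / 2 - 1) / 2, by omega⟩
  obtain ⟨y, hy⟩ : ∃ y, (l + m) / 2 = 2 * y + 1 := ⟨((l + m) / 2 - 1) / 2, by omega⟩
  obtain ⟨w, hw⟩ : ∃ w, x + y = 4 * w + 1 := ⟨(x + y) / 4, by omega⟩
  -- per-term identity
  have hk : ∀ k, sigmaLM l m k * ((2 * k + 1)‼ : ℚ)
      = (-1) ^ k * (k ! : ℚ) * (((2 * x + 1).choose k : ℚ)) * (((2 * y + 1).choose k : ℚ)) := by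
    intro k
    have h := sigma_mul l m k hodd
    rwa [hx, hy] at h
  -- bound for a single term with `8 ∣` numerator
  have hterm : ∀ k : ℕ, (8 : ℤ) ∣ ((-1) ^ k * (k ! : ℤ) * ((2 * x + 1).choose k : ℤ)
        * ((2 * y + 1).choose k : ℤ)) →
      ‖((sigmaLM l m k : ℚ) : ℚ_[2])‖ ≤ (2 : ℝ) ^ (-(3 : ℤ)) := by
    intro k hdvd
    obtain ⟨c, hc⟩ := hdvd
    refine norm8 _ c ((2 * k + 1)‼ : ℤ) ?_ ?_
    · have := dfac_odd_mod k
      omega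
    · have h1 : sigmaLM l m k * (((2 * k + 1)‼ : ℤ) : ℚ) = ((8 * c : ℤ) : ℚ) := by
        push_cast
        rw [hk k]
        have h2 := congrArg (fun z : ℤ => (z : ℚ)) hc
        push_cast at h2
        linear_combination h2
      exact h1
  -- tail terms
  have htail : ∀ i : ℕ, ‖((sigmaLM l m (4 + i) : ℚ) : ℚ_[2])‖ ≤ (2 : ℝ) ^ (-(3 : ℤ)) := by
    intro i
    apply hterm
    have h8 : (8 : ℕ) ∣ (4 + i)! := by
      have h24 : (24 : ℕ) ∣ (4 + i)! := by
        have : (4 : ℕ)! ∣ (4 + i)! := Nat.factorial_dvd_factorial (by omega)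
        simpa [Nat.factorial] using this
      omega
    have h8' : (8 : ℤ) ∣ ((4 + i)! : ℤ) := Int.natCast_dvd_natCast.mpr h8
    exact Dvd.dvd.mul_right (Dvd.dvd.mul_right (Dvd.dvd.mul_left h8' _) _) _
  -- head: 8 divides the integer value
  have hdvdP : (8 : ℤ) ∣ (945 - 315 * ((2 * (x : ℤ) + 1) * (2 * (y : ℤ) + 1))
      + 126 * (((x : ℤ) * (2 * (x : ℤ) + 1)) * ((y : ℤ) * (2 * (y : ℤ) + 1)))
      - 6 * (((x : ℤ) * (2 * (x : ℤ) + 1) * (2 * (x : ℤ) - 1))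
        * ((y : ℤ) * (2 * (y : ℤ) + 1) * (2 * (y : ℤ) - 1)))) := by
    have hcond : ((x : ZMod 8) + (y : ZMod 8)) = 4 * (w : ZMod 8) + 1 := by
      have := congrArg (fun n : ℕ => (n : ZMod 8)) hw
      push_cast at this
      exact this
    have hz := zmodKey (x : ZMod 8) (y : ZMod 8) (w : ZMod 8) hcond
    have h8 : ((8 : ℕ) : ℤ) = 8 := by norm_num
    rw [← h8, ← ZMod.intCast_zmod_eq_zero_iff_dvd]
    push_cast
    linear_combination hz
  obtain ⟨c, hc⟩ := hdvdP
  -- choose formulas in ℚ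
  have f2a : (((2 * x + 1).choose 2 : ℕ) : ℚ) = (x : ℚ) * (2 * (x : ℚ) + 1) := by
    have h := choose2_int (2 * x + 1)
    have h' : (((2 * x + 1).choose 2 : ℕ) : ℚ) * 2 = (2 * (x : ℚ) + 1) * (2 * (x : ℚ) + 1 - 1) := by
      exact_mod_cast h
    linear_combination h' / 2
  have f2b : (((2 * y + 1).choose 2 : ℕ) : ℚ) = (y : ℚ) * (2 * (y : ℚ) + 1) := by
    have h := choose2_int (2 * y + 1)
    have h' : (((2 * y + 1).choose 2 : ℕ) : ℚ) * 2 = (2 * (y : ℚ) + 1) * (2 * (y : ℚ) + 1 - 1) := by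
      exact_mod_cast h
    linear_combination h' / 2
  have f3a : (((2 * x + 1).choose 3 : ℕ) : ℚ)
      = (x : ℚ) * (2 * (x : ℚ) + 1) * (2 * (x : ℚ) - 1) / 3 := by
    have h := choose3_int (2 * x + 1)
    have h' : (((2 * x + 1).choose 3 : ℕ) : ℚ) * 6
        = (2 * (x : ℚ) + 1) * (2 * (x : ℚ) + 1 - 1) * (2 * (x : ℚ) + 1 - 2) := by
      exact_mod_cast h
    linear_combination h' / 6
  have f3b : (((2 * y + 1).choose 3 : ℕ) : ℚ)
      = (y : ℚ) * (2 * (y : ℚ) + 1) * (2 * (y : ℚ) - 1) / 3 := by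
    have h := choose3_int (2 * y + 1)
    have h' : (((2 * y + 1).choose 3 : ℕ) : ℚ) * 6
        = (2 * (y : ℚ) + 1) * (2 * (y : ℚ) + 1 - 1) * (2 * (y : ℚ) + 1 - 2) := by
      exact_mod_cast h
    linear_combination h' / 6
  -- the four head terms
  have e0 := hk 0
  have e1 := hk 1
  have e2 := hk 2
  have e3 := hk 3
  rw [show (2 * 0 + 1)‼ = 1 from rfl] at e0
  rw [show (2 * 1 + 1)‼ = 3 from rfl] at e1
  rw [show (2 * 2 + 1)‼ = 15 from rfl] at e2
  rw [show (2 * 3 + 1)‼ = 105 from rfl] at e3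
  rw [Nat.choose_zero_right, Nat.choose_zero_right] at e0
  rw [Nat.choose_one_right, Nat.choose_one_right] at e1
  rw [f2a, f2b] at e2
  rw [f3a, f3b] at e3
  norm_num [Nat.factorial] at e0 e1 e2 e3
  -- head bound
  have hS : ‖(((∑ k ∈ Finset.range 4, sigmaLM l m k : ℚ)) : ℚ_[2])‖ ≤ (2 : ℝ) ^ (-(3 : ℤ)) := by
    refine norm8 _ c (945 : ℤ) (by norm_num) ?_
    rw [Finset.sum_range_succ, Finset.sum_range_succ, Finset.sum_range_succ,
      Finset.sum_range_one]
    have hPc : ((8 * c : ℤ) : ℚ) = ((945 - 315 * ((2 * (x : ℤ) + 1) * (2 * (y : ℤ) + 1))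
        + 126 * (((x : ℤ) * (2 * (x : ℤ) + 1)) * ((y : ℤ) * (2 * (y : ℤ) + 1)))
        - 6 * (((x : ℤ) * (2 * (x : ℤ) + 1) * (2 * (x : ℤ) - 1))
          * ((y : ℤ) * (2 * (y : ℤ) + 1) * (2 * (y : ℤ) - 1))) : ℤ) : ℚ) := by
      exact_mod_cast congrArg (fun z : ℤ => (z : ℚ)) hc.symm
    rw [hPc]
    push_cast
    linear_combination (945 : ℚ) * e0 + 315 * e1 + 63 * e2 + 9 * e3
  -- decompose the sum
  have hH : HLM l m = (∑ k ∈ Finset.range 4, sigmaLM l m k)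
      + ∑ i ∈ Finset.range ((l - m) / 2 + 1), sigmaLM l m (4 + i) := by
    rw [HLM]
    have hext : ∑ k ∈ Finset.range ((l - m) / 2 + 1), sigmaLM l m k
        = ∑ k ∈ Finset.range (4 + ((l - m) / 2 + 1)), sigmaLM l m k := by
      apply Finset.sum_subset (Finset.range_subset_range.mpr (by omega))
      intro k hk1 hk2
      simp only [Finset.mem_range, not_lt] at hk2
      have hlt : (l - m) / 2 < k := by omega
      simp [sigmaLM, Nat.choose_eq_zero_of_lt hlt]
    rw [hext, Finset.sum_range_add]
  rw [Cong2, sub_zero, hH]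
  have hfin : ‖(((∑ k ∈ Finset.range 4, sigmaLM l m k)
      + ∑ i ∈ Finset.range ((l - m) / 2 + 1), sigmaLM l m (4 + i) : ℚ) : ℚ_[2])‖
      ≤ (2 : ℝ) ^ (-(3 : ℤ)) := by
    rw [Rat.cast_add]
    refine le_trans (Padic.nonarchimedean _ _) (max_le hS ?_)
    rw [Rat.cast_sum]
    exact IsUltrametricDist.norm_sum_le_of_forall_le_of_nonneg (by positivity)
      (fun i _ => htail i)
  refine le_trans hfin (le_of_eq ?_)
  norm_num
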